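/- For every real x₀ > 0 there exists a constant C = C(x₀) > 0 such that for all x ∈ [0, x₀] and all n ∈ ℕ, |g̃^{(n)}(1,x)|/n! ≤ C·(n+1). -/

import Mathlib

/-- `g̃(t,x) = t^{-1/2} · exp(-x²/t)`. -/
noncomputable def gTilde (t x : ℝ) : ℝ := t ^ (-(1 / 2) : ℝ) * Real.exp (-x ^ 2 / t)

open Complex Metric Filter

/-- Iterated derivatives of a holomorphic function are analytic on an open set. -/
lemma analyticOnNhd_iteratedDeriv {F : ℂ → ℂ} {U : Set ℂ} (hU : IsOpen U)
    (hF : DifferentiableOn ℂ F U) (n : ℕ) : AnalyticOnNhd ℂ (iteratedDeriv n F) U := by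
  induction n with
  | zero => simpa using hF.analyticOnNhd hU
  | succ m ih => rw [iteratedDeriv_succ]; exact ih.deriv

/-- Transfer of iterated derivatives from ℂ to ℝ. -/
lemma iteratedDeriv_re_eq {F : ℂ → ℂ} {U : Set ℂ} (hU : IsOpen U)
    (hF : DifferentiableOn ℂ F U) (n : ℕ) :
    ∀ t : ℝ, (t : ℂ) ∈ U →
      iteratedDeriv n (fun s : ℝ => (F s).re) t = (iteratedDeriv n F t).re := by
  induction n with
  | zero => intro t _; simp
  | succ n ih =>
    intro t ht
    have hdiff : DifferentiableAt ℂ (iteratedDeriv n F) t :=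
      ((analyticOnNhd_iteratedDeriv hU hF n) _ ht).differentiableAt
    have h1 : HasDerivAt (fun s : ℝ => ((iteratedDeriv n F) s).re)
        (deriv (iteratedDeriv n F) t).re t := hdiff.hasDerivAt.real_of_complex
    have heq : (iteratedDeriv n (fun s : ℝ => (F s).re))
        =ᶠ[nhds t] fun s : ℝ => ((iteratedDeriv n F) s).re := by
      have hmem : ∀ᶠ s : ℝ in nhds t, (s : ℂ) ∈ U :=
        (hU.preimage Complex.continuous_ofReal).mem_nhds ht
      filter_upwards [hmem] with s hs using ih s hs
    rw [iteratedDeriv_succ, heq.deriv_eq, h1.deriv, iteratedDeriv_succ]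

/-- Cauchy estimate for iterated derivatives. -/
lemma iteratedDeriv_cauchy_bound {F : ℂ → ℂ} {c : ℂ} {r M : ℝ} (hr : 0 < r)
    (hF : DifferentiableOn ℂ F (closedBall c r))
    (hbound : ∀ z ∈ sphere c r, ‖F z‖ ≤ M) (n : ℕ) :
    ‖iteratedDeriv n F c‖ ≤ (n.factorial : ℝ) * M / r ^ n := by
  set R : NNReal := ⟨r, hr.le⟩ with hRdef
  have hR0 : 0 < R := by exact_mod_cast hr
  have hF' : DifferentiableOn ℂ F (closedBall c (R : ℝ)) := hF
  have h := hF'.hasFPowerSeriesOnBall hR0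
  set p := cauchyPowerSeries F c R with hp
  have key := h.factorial_smul (y := (1 : ℂ)) n
  have hM : 0 ≤ M := le_trans (norm_nonneg _) (hbound _ (circleMap_mem_sphere c hr.le 0))
  have hiter : iteratedDeriv n F c = (n.factorial : ℂ) * p n (fun _ => 1) := by
    rw [iteratedDeriv_eq_iteratedFDeriv, ← key]
    simp [nsmul_eq_mul]
  have hcont : Continuous fun θ : ℝ => ‖F (circleMap c r θ)‖ := by
    refine (hF.continuousOn.comp_continuous (continuous_circleMap c r) ?_).norm
    intro θ
    exact sphere_subset_closedBall (circleMap_mem_sphere c hr.le θ)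
  have hint : ∫ θ : ℝ in (0)..2 * Real.pi, ‖F (circleMap c r θ)‖ ≤ 2 * Real.pi * M := by
    calc ∫ θ : ℝ in (0)..2 * Real.pi, ‖F (circleMap c r θ)‖
        ≤ ∫ _ : ℝ in (0)..2 * Real.pi, M := by
          apply intervalIntegral.integral_mono_on Real.two_pi_pos.le
            (hcont.intervalIntegrable _ _) (intervalIntegrable_const)
          intro θ _
          exact hbound _ (circleMap_mem_sphere c hr.le θ)
      _ = 2 * Real.pi * M := by simp [mul_comm]
  have hpn : ‖p n‖ ≤ M * r⁻¹ ^ n := by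
    refine le_trans (norm_cauchyPowerSeries_le F c r n) ?_
    rw [_root_.abs_of_nonneg hr.le]
    have h2 : (2 * Real.pi)⁻¹ * ∫ θ : ℝ in (0)..2 * Real.pi, ‖F (circleMap c r θ)‖ ≤ M := by
      calc (2 * Real.pi)⁻¹ * ∫ θ : ℝ in (0)..2 * Real.pi, ‖F (circleMap c r θ)‖
          ≤ (2 * Real.pi)⁻¹ * (2 * Real.pi * M) :=
            mul_le_mul_of_nonneg_left hint (inv_nonneg.mpr Real.two_pi_pos.le)
        _ = M := by field_simp
    exact mul_le_mul_of_nonneg_right h2 (by positivity)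
  have happ : ‖p n (fun _ => (1 : ℂ))‖ ≤ ‖p n‖ := by
    refine le_trans ((p n).le_opNorm _) ?_
    simp
  rw [hiter, norm_mul]
  have hnf : ‖(n.factorial : ℂ)‖ = (n.factorial : ℝ) := by simp
  rw [hnf, div_eq_mul_inv, ← inv_pow]
  have hfac : (0 : ℝ) ≤ (n.factorial : ℝ) := Nat.cast_nonneg _
  calc (n.factorial : ℝ) * ‖p n (fun _ => (1 : ℂ))‖
      ≤ (n.factorial : ℝ) * (M * r⁻¹ ^ n) :=
        mul_le_mul_of_nonneg_left (happ.trans hpn) hfac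
    _ = (n.factorial : ℝ) * M * r⁻¹ ^ n := by ring

/-- For every `x₀ > 0` there is `C > 0` such that for all `x ∈ [0,x₀]` and all `n : ℕ`,
`|g̃^{(n)}(1,x)| / n! ≤ C (n+1)`. -/
theorem stmt_8 (x₀ : ℝ) (hx₀ : 0 < x₀) :
    ∃ C > (0 : ℝ), ∀ x ∈ Set.Icc (0 : ℝ) x₀, ∀ n : ℕ,
      |iteratedDeriv n (fun s => gTilde s x) 1| / (n.factorial : ℝ) ≤ C * ((n : ℝ) + 1) := by
  refine ⟨Real.exp 1, Real.exp_pos 1, ?_⟩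
  intro x _ n
  set F : ℂ → ℂ := fun z => z ^ (-(1 / 2) : ℂ) * Complex.exp (-(x : ℂ) ^ 2 / z) with hFdef
  -- differentiability on the ball
  have hre : ∀ z : ℂ, z ∈ ball (1 : ℂ) 1 → 0 < z.re := by
    intro z hz
    have h1 : |z.re - 1| ≤ ‖z - 1‖ := by
      simpa using Complex.abs_re_le_norm (z - 1)
    have h2 : ‖z - 1‖ < 1 := by
      simpa [Complex.dist_eq] using (mem_ball.mp hz)
    have := (abs_lt.mp (lt_of_le_of_lt h1 h2)).1
    linarith
  have hFdiff : DifferentiableOn ℂ F (ball (1 : ℂ) 1) := by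
    intro z hz
    have hz0 : z ≠ 0 := by
      intro h; rw [h] at hz; exact absurd (hre 0 hz) (by simp)
    have hslit : z ∈ Complex.slitPlane := Or.inl (hre z hz)
    refine DifferentiableAt.differentiableWithinAt ?_
    exact ((differentiableAt_id.cpow (differentiableAt_const _) hslit)).mul
      (((differentiableAt_const _).div differentiableAt_id hz0).cexp)
  -- real/complex relation
  have hagree : (fun s : ℝ => gTilde s x) =ᶠ[nhds (1 : ℝ)] fun s : ℝ => (F s).re := by
    have : Set.Ioi (0 : ℝ) ∈ nhds (1 : ℝ) := Ioi_mem_nhds one_pos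
    filter_upwards [this] with s hs
    have hs' : (0 : ℝ) < s := hs
    have h1 : ((s : ℂ)) ^ (-(1 / 2) : ℂ) = ((s ^ (-(1 / 2) : ℝ) : ℝ) : ℂ) := by
      rw [Complex.ofReal_cpow hs'.le]
      norm_num
    have h2 : Complex.exp (-(x : ℂ) ^ 2 / s) = ((Real.exp (-x ^ 2 / s) : ℝ) : ℂ) := by
      rw [Complex.ofReal_exp]
      congr 1
      push_cast
      ring
    simp only [hFdef, h1, h2, ← Complex.ofReal_mul, Complex.ofReal_re, gTilde]
  have htrans : iteratedDeriv n (fun s : ℝ => gTilde s x) 1 = (iteratedDeriv n F 1).re := by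
    rw [hagree.iteratedDeriv_eq n]
    exact iteratedDeriv_re_eq isOpen_ball hFdiff n 1 (by simp)
  rcases Nat.eq_zero_or_pos n with hn | hn
  · subst hn
    simp only [iteratedDeriv_zero, Nat.factorial_zero, Nat.cast_one, div_one, Nat.cast_zero,
      zero_add, mul_one]
    have : gTilde 1 x = Real.exp (-x ^ 2) := by
      simp [gTilde, Real.one_rpow]
    rw [this, _root_.abs_of_nonneg (Real.exp_pos _).le]
    calc Real.exp (-x ^ 2) ≤ 1 := Real.exp_le_one_iff.mpr (neg_nonpos.mpr (sq_nonneg x))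
      _ ≤ Real.exp 1 := Real.one_le_exp one_pos.le
  -- main case n ≥ 1
  set r : ℝ := (n : ℝ) / ((n : ℝ) + 1) with hrdef
  have hn1 : (0 : ℝ) < (n : ℝ) := by exact_mod_cast hn
  have hn2 : (0 : ℝ) < (n : ℝ) + 1 := by linarith
  have hr0 : 0 < r := div_pos hn1 hn2
  have hr1 : r < 1 := (div_lt_one hn2).mpr (by linarith)
  have h1r : 1 - r = ((n : ℝ) + 1)⁻¹ := by
    rw [hrdef, eq_comm, inv_eq_iff_eq_inv, eq_comm, inv_eq_one_div]
    field_simp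
    ring
  have h1r0 : 0 < 1 - r := by linarith
  have hsub : closedBall (1 : ℂ) r ⊆ ball (1 : ℂ) 1 := closedBall_subset_ball hr1
  have hbound : ∀ z ∈ sphere (1 : ℂ) r, ‖F z‖ ≤ (n : ℝ) + 1 := by
    intro z hz
    have hzball : z ∈ ball (1 : ℂ) 1 := hsub (sphere_subset_closedBall hz)
    have hzre : 0 < z.re := hre z hzball
    have hzabs : 1 - r ≤ ‖z‖ := by
      have h1 : ‖(1 : ℂ) - z‖ = r := by
        rw [norm_sub_rev, ← dist_eq_norm]
        exact mem_sphere.mp hz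
      have h2 : ‖(1 : ℂ)‖ - ‖(1 : ℂ) - z‖ ≤ ‖(1 : ℂ) - (1 - z)‖ := norm_sub_norm_le _ _
      rw [sub_sub_cancel, h1, norm_one] at h2
      simpa using h2
    have hz0 : (0:ℝ) < ‖z‖ := lt_of_lt_of_le h1r0 hzabs
    have hcpow : ‖z ^ (-(1 / 2) : ℂ)‖ ≤ ((n : ℝ) + 1) := by
      have h1 : ‖z ^ (-(1 / 2) : ℂ)‖ ≤ ‖z‖ ^ ((-(1 / 2) : ℂ)).re := by
        have := Complex.norm_cpow_le z (-(1 / 2) : ℂ)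
        simpa using this
      have hre' : ((-(1 / 2) : ℂ)).re = (-(1 / 2) : ℝ) := by norm_num
      rw [hre'] at h1
      refine le_trans h1 ?_
      calc ‖z‖ ^ (-(1 / 2) : ℝ)
          ≤ (1 - r) ^ (-(1 / 2) : ℝ) :=
            Real.rpow_le_rpow_of_nonpos h1r0 hzabs (by norm_num)
        _ ≤ (1 - r) ^ (-1 : ℝ) :=
            Real.rpow_le_rpow_of_exponent_ge h1r0 (by linarith) (by norm_num)
        _ = ((n : ℝ) + 1) := by
            rw [h1r, Real.rpow_neg_one, inv_inv]
    have hexp : ‖Complex.exp (-(x : ℂ) ^ 2 / z)‖ ≤ 1 := by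
      rw [Complex.norm_exp]
      refine Real.exp_le_one_iff.mpr ?_
      have : (-(x : ℂ) ^ 2 / z) = ((-(x ^ 2) : ℝ) : ℂ) * z⁻¹ := by
        push_cast; ring
      rw [this, Complex.re_ofReal_mul]
      have hinvre : 0 ≤ (z⁻¹).re := by
        rw [Complex.inv_re]
        exact div_nonneg hzre.le (Complex.normSq_nonneg z)
      have hx2 : (0:ℝ) ≤ x ^ 2 := sq_nonneg x
      nlinarith
    calc ‖F z‖ = ‖z ^ (-(1 / 2) : ℂ)‖ * ‖Complex.exp (-(x : ℂ) ^ 2 / z)‖ := norm_mul _ _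
      _ ≤ ((n : ℝ) + 1) * 1 := mul_le_mul hcpow hexp (norm_nonneg _) (by positivity)
      _ = (n : ℝ) + 1 := mul_one _
  have hcauchy : ‖iteratedDeriv n F 1‖ ≤ (n.factorial : ℝ) * ((n : ℝ) + 1) / r ^ n :=
    iteratedDeriv_cauchy_bound hr0 (hFdiff.mono hsub) hbound n
  have hrn : (1 : ℝ) / r ^ n ≤ Real.exp 1 := by
    have h1 : 1 / r = 1 + 1 / (n : ℝ) := by
      rw [hrdef]; field_simp
    have h2 : (1 : ℝ) / r ^ n = ((1 : ℝ) / r) ^ n := by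
      rw [one_div, one_div, inv_pow]
    rw [h2, h1]
    have h3 : (1 : ℝ) + 1 / (n : ℝ) ≤ Real.exp (1 / (n : ℝ)) := by
      have := Real.add_one_le_exp (1 / (n : ℝ))
      linarith
    calc (1 + 1 / (n : ℝ)) ^ n ≤ (Real.exp (1 / (n : ℝ))) ^ n := by
          apply pow_le_pow_left₀ (by positivity) h3
      _ = Real.exp ((n : ℝ) * (1 / (n : ℝ))) := by
          rw [← Real.exp_nat_mul]
      _ = Real.exp 1 := by
          congr 1
          field_simp
  have hfacpos : (0 : ℝ) < (n.factorial : ℝ) := by exact_mod_cast n.factorial_pos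
  rw [htrans]
  rw [div_le_iff₀ hfacpos]
  calc |(iteratedDeriv n F 1).re| ≤ ‖iteratedDeriv n F 1‖ := by
        simpa using Complex.abs_re_le_norm (iteratedDeriv n F 1)
    _ ≤ (n.factorial : ℝ) * ((n : ℝ) + 1) / r ^ n := hcauchy
    _ = (n.factorial : ℝ) * ((n : ℝ) + 1) * (1 / r ^ n) := by ring
    _ ≤ (n.factorial : ℝ) * ((n : ℝ) + 1) * Real.exp 1 := by
        have hnn : (0:ℝ) ≤ (n.factorial : ℝ) * ((n : ℝ) + 1) := by positivity
        exact mul_le_mul_of_nonneg_left hrn hnn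
    _ = Real.exp 1 * ((n : ℝ) + 1) * (n.factorial : ℝ) := by ring
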